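/- arXiv:2010.05285 — 2 statements merged into one kernel-verified Lean document; each statement's English description precedes it below -/
import Mathlib

section
/- Let G be a finite abelian group, let S be a symmetric subset of G with 0 ∉ S, and let k be a positive integer such that ks ≠ kt for all distinct s,t ∈ S and 0 ∉ kS, where kS = {ks : s ∈ S}. If φ is an automorphism of the Cayley graph Cay(G;S) with φ(0) = 0, then φ maps the set kS onto itself, i.e., φ(kS) = kS. -/
/-- The Cayley graph of an abelian group `G` with connection set `S`.
When `S` is symmetric and `0 ∉ S`, distinct `g, h` are adjacent iff `g - h ∈ S`. -/
def cayleyGraph {G : Type*} [AddCommGroup G] (S : Set G) : SimpleGraph G where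
  Adj g h := g ≠ h ∧ g - h ∈ S ∧ h - g ∈ S
  symm := by constructor; rintro g h ⟨hne, h1, h2⟩; exact ⟨hne.symm, h2, h1⟩
  loopless := by constructor; rintro g ⟨hne, -, -⟩; exact hne rfl

/-- The canonical bipartite double cover of a simple graph. -/
def doubleCover {V : Type*} (X : SimpleGraph V) : SimpleGraph (V × ZMod 2) where
  Adj a b := X.Adj a.1 b.1 ∧ a.2 ≠ b.2
  symm := by constructor; rintro a b ⟨h1, h2⟩; exact ⟨h1.symm, h2.symm⟩
  loopless := by constructor; rintro a ⟨-, h2⟩; exact h2 rfl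

/-- The direct (tensor/categorical) product of simple graphs. -/
def directProd {V W : Type*} (X : SimpleGraph V) (Y : SimpleGraph W) :
    SimpleGraph (V × W) where
  Adj a b := X.Adj a.1 b.1 ∧ Y.Adj a.2 b.2
  symm := by constructor; rintro a b ⟨h1, h2⟩; exact ⟨h1.symm, h2.symm⟩
  loopless := by constructor; rintro a ⟨h1, -⟩; exact X.loopless.irrefl _ h1


open Finset Function MulAction

section Aux
variable {G : Type*} [AddCommGroup G]

/-- Tuples of length `p` with entries in `T` summing to `x`. -/
abbrev Tup (p : ℕ) (T : Set G) (x : G) : Type _ :=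
  {f : Fin p → G // (∀ i, f i ∈ T) ∧ ∑ i, f i = x}

instance rotSMul (p : ℕ) [NeZero p] (T : Set G) (x : G) :
    SMul (Multiplicative (Fin p)) (Tup p T x) :=
  ⟨fun j f => ⟨fun i => f.1 (i + Multiplicative.toAdd j), fun i => f.2.1 _, (Fintype.sum_equiv (Equiv.addRight (Multiplicative.toAdd j)) _ f.1 (fun i => rfl)).trans f.2.2⟩⟩

instance rotAction (p : ℕ) [NeZero p] (T : Set G) (x : G) :
    MulAction (Multiplicative (Fin p)) (Tup p T x) where
  one_smul f := Subtype.ext <| funext fun i => congrArg f.1 (by simp)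
  mul_smul j k f := Subtype.ext <| funext fun i => congrArg f.1 (by simp [add_assoc])

end Aux

lemma tup_card_dvd_iff {G : Type*} [AddCommGroup G] [Fintype G]
    {p : ℕ} (hp : p.Prime) (T : Set G)
    (hTinj : ∀ a ∈ T, ∀ b ∈ T, p • a = p • b → a = b) (x : G) :
    p ∣ Nat.card (Tup p T x) ↔ ¬ ∃ t ∈ T, p • t = x := by
  classical
  haveI : NeZero p := ⟨hp.ne_zero⟩
  haveI : Fact p.Prime := ⟨hp⟩
  have hPG : IsPGroup p (Multiplicative (Fin p)) := IsPGroup.of_card (by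
    rw [Nat.card_congr Multiplicative.toAdd, Nat.card_eq_fintype_card, Fintype.card_fin, pow_one])
  have hmod := hPG.card_modEq_card_fixedPoints (Tup p T x)
  have he : fixedPoints (Multiplicative (Fin p)) (Tup p T x) ≃ {t : G // t ∈ T ∧ p • t = x} := by
    refine ⟨fun f => ⟨f.1.1 0, f.1.2.1 0, ?_⟩, fun t =>
      ⟨⟨fun _ => t.1, fun _ => t.2.1, by
        rw [Finset.sum_const, Finset.card_univ, Fintype.card_fin]; exact t.2.2⟩,
        fun j => Subtype.ext rfl⟩, fun f => Subtype.ext (Subtype.ext (funext fun i => ?_)),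
      fun t => rfl⟩
    · have hconst : ∀ i, f.1.1 i = f.1.1 0 := by
        intro i
        have := f.2 (Multiplicative.ofAdd i)
        have h2 : f.1.1 (0 + i) = f.1.1 0 := congrFun (congrArg Subtype.val this) 0
        simpa using h2
      calc p • f.1.1 0 = ∑ _i : Fin p, f.1.1 0 := by
            rw [Finset.sum_const, Finset.card_univ, Fintype.card_fin]
        _ = ∑ i : Fin p, f.1.1 i := Finset.sum_congr rfl fun i _ => (hconst i).symm
        _ = x := f.1.2.2
    · -- left_inv : constant function equals f
      have hconst : ∀ i', f.1.1 i' = f.1.1 0 := by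
        intro i'
        have := f.2 (Multiplicative.ofAdd i')
        have h2 : f.1.1 (0 + i') = f.1.1 0 := congrFun (congrArg Subtype.val this) 0
        simpa using h2
      exact (hconst i).symm
  have hfixcard : Nat.card (fixedPoints (Multiplicative (Fin p)) (Tup p T x))
      = Nat.card {t : G // t ∈ T ∧ p • t = x} := Nat.card_congr he
  haveI : Subsingleton {t : G // t ∈ T ∧ p • t = x} :=
    ⟨fun a b => Subtype.ext (hTinj _ a.2.1 _ b.2.1 (a.2.2.trans b.2.2.symm))⟩
  by_cases hex : ∃ t ∈ T, p • t = x
  · simp only [hex, not_true, iff_false]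
    intro hdvd
    obtain ⟨t, ht, htx⟩ := hex
    haveI : Nonempty {t : G // t ∈ T ∧ p • t = x} := ⟨⟨t, ht, htx⟩⟩
    have h1 : Nat.card {t : G // t ∈ T ∧ p • t = x} = 1 := by
      haveI := uniqueOfSubsingleton (Classical.arbitrary {t : G // t ∈ T ∧ p • t = x})
      exact Nat.card_unique
    have hm : Nat.card (Tup p T x) ≡ 1 [MOD p] := by rw [← h1, ← hfixcard]; exact hmod
    have h0 : Nat.card (Tup p T x) % p = 0 := (Nat.mod_eq_zero_of_dvd hdvd)
    have h1' : Nat.card (Tup p T x) % p = 1 % p := hm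
    have h2' : 1 % p = 1 := Nat.mod_eq_of_lt hp.one_lt
    omega
  · simp only [hex, not_false_iff, iff_true]
    haveI : IsEmpty {t : G // t ∈ T ∧ p • t = x} := ⟨fun t => hex ⟨t.1, t.2.1, t.2.2⟩⟩
    have h0 : Nat.card {t : G // t ∈ T ∧ p • t = x} = 0 := Nat.card_of_isEmpty
    exact (Nat.modEq_zero_iff_dvd).mp (hmod.trans (by rw [hfixcard, h0]))

lemma tup_card_le {G : Type*} [AddCommGroup G] [Fintype G] (p : ℕ) (T : Set G)
    (φ : G ≃ G) (hrel : ∀ a b : G, a - b ∈ T → φ a - φ b ∈ T) (g h : G) :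
    Nat.card (Tup p T (g - h)) ≤ Nat.card (Tup p T (φ g - φ h)) := by
  classical
  set F : (Fin p → G) → ℕ → G := fun f i => if hi : i < p then f ⟨i, hi⟩ else 0 with hF
  set w : (Fin p → G) → ℕ → G := fun f j => h + ∑ i ∈ Finset.range j, F f i with hw
  have hFval : ∀ (f : Fin p → G) (i : Fin p), F f i = f i := by
    intro f i; simp [hF, i.isLt]
  have hw0 : ∀ f, w f 0 = h := by intro f; simp [hw]
  have hstep : ∀ f j, w f (j + 1) = w f j + F f j := by
    intro f j; simp [hw, Finset.sum_range_succ, add_assoc]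
  have hdiff : ∀ (f : Tup p T (g - h)) (i : Fin p), w f.1 (i + 1) - w f.1 i = f.1 i := by
    intro f i; rw [hstep, add_sub_cancel_left, hFval]
  have hwlast : ∀ f : Tup p T (g - h), w f.1 p = g := by
    intro f
    have hsum : ∑ i ∈ Finset.range p, F f.1 i = g - h := by
      rw [← Fin.sum_univ_eq_sum_range]
      calc ∑ i : Fin p, F f.1 i = ∑ i : Fin p, f.1 i :=
            Finset.sum_congr rfl fun i _ => hFval f.1 i
        _ = g - h := f.2.2
    rw [hw]; simp [hsum]
  let Ψ : Tup p T (g - h) → Tup p T (φ g - φ h) := fun f =>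
    ⟨fun i => φ (w f.1 (i + 1)) - φ (w f.1 i),
      fun i => hrel _ _ (by rw [hdiff]; exact f.2.1 i),
      by
        rw [Fin.sum_univ_eq_sum_range (fun j => φ (w f.1 (j + 1)) - φ (w f.1 j)) p,
          Finset.sum_range_sub (fun j => φ (w f.1 j)) p, hwlast, hw0]⟩
  have hΨinj : Injective Ψ := by
    intro f₁ f₂ hequ
    have hcomp : ∀ i : Fin p,
        φ (w f₁.1 (i + 1)) - φ (w f₁.1 i) = φ (w f₂.1 (i + 1)) - φ (w f₂.1 i) :=
      fun i => congrFun (congrArg Subtype.val hequ) i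
    have hwj : ∀ j, j ≤ p → w f₁.1 j = w f₂.1 j := by
      intro j
      induction j with
      | zero => intro _; rw [hw0, hw0]
      | succ j ih =>
        intro hj
        have h1 := hcomp ⟨j, by omega⟩
        simp only [] at h1
        rw [ih (by omega)] at h1
        exact φ.injective (sub_left_inj.mp h1)
    refine Subtype.ext (funext fun i => ?_)
    rw [← hdiff f₁ i, ← hdiff f₂ i, hwj _ (by omega), hwj _ (by omega)]
  exact Nat.card_le_card_of_injective Ψ hΨinj

lemma tup_card_eq {G : Type*} [AddCommGroup G] [Fintype G] (p : ℕ) (T : Set G)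
    (φ : G ≃ G) (hrel : ∀ a b : G, a - b ∈ T ↔ φ a - φ b ∈ T) (g h : G) :
    Nat.card (Tup p T (g - h)) = Nat.card (Tup p T (φ g - φ h)) := by
  refine le_antisymm (tup_card_le p T φ (fun a b => (hrel a b).mp) g h) ?_
  have h2 := tup_card_le p T φ.symm (fun a b hab => by
    have := (hrel (φ.symm a) (φ.symm b)).mpr
    simp only [Equiv.apply_symm_apply] at this
    exact this hab) (φ g) (φ h)
  simpa using h2

lemma key_rel {G : Type*} [AddCommGroup G] [Fintype G] (S : Set G)
    (hSsym : ∀ s ∈ S, -s ∈ S) (hS0 : (0 : G) ∉ S)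
    (φ : cayleyGraph S ≃g cayleyGraph S) :
    ∀ k : ℕ, 0 < k → (∀ s ∈ S, ∀ t ∈ S, k • s = k • t → s = t) →
      ∀ g h : G, ((∃ s ∈ S, k • s = g - h) ↔ (∃ s ∈ S, k • s = φ g - φ h)) := by
  have base : ∀ a b : G, a - b ∈ S ↔ φ a - φ b ∈ S := by
    intro a b
    constructor
    · intro hab
      have hne : a ≠ b := by rintro rfl; rw [sub_self] at hab; exact hS0 hab
      have hadj : (cayleyGraph S).Adj a b := ⟨hne, hab, neg_sub a b ▸ hSsym _ hab⟩
      exact (φ.map_rel_iff.mpr hadj).2.1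
    · intro hab
      have hne : φ a ≠ φ b := by
        intro e; rw [e, sub_self] at hab; exact hS0 hab
      have hadj : (cayleyGraph S).Adj (φ a) (φ b) :=
        ⟨hne, hab, neg_sub (φ a) (φ b) ▸ hSsym _ hab⟩
      exact (φ.map_rel_iff.mp hadj).2.1
  intro k
  induction k using Nat.strong_induction_on with
  | _ k IH =>
    intro hk hkinj g h
    rcases eq_or_ne k 1 with rfl | hk1
    · simp only [one_smul]
      constructor
      · rintro ⟨s, hs, rfl⟩
        exact ⟨φ g - φ h, (base g h).mp hs, rfl⟩
      · rintro ⟨s, hs, rfl⟩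
        exact ⟨g - h, (base g h).mpr hs, rfl⟩
    · set p := k.minFac with hpdef
      have hp : p.Prime := Nat.minFac_prime hk1
      obtain ⟨m, hm⟩ : p ∣ k := Nat.minFac_dvd k
      have hmpos : 0 < m := by
        rcases Nat.eq_zero_or_pos m with rfl | h'
        · omega
        · exact h'
      have hmlt : m < k := by
        have h2 : 2 ≤ p := hp.two_le
        calc m = 1 * m := (one_mul m).symm
          _ < p * m := (Nat.mul_lt_mul_right hmpos).mpr (by omega)
          _ = k := hm.symm
      have hksmul : ∀ s : G, k • s = p • (m • s) := by
        intro s; rw [hm, mul_comm p m, mul_nsmul]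
      have hminj : ∀ s ∈ S, ∀ t ∈ S, m • s = m • t → s = t := by
        intro s hs t ht he
        exact hkinj s hs t ht (by rw [hksmul, hksmul, he])
      have IHm := IH m hmlt hmpos hminj
      set T : Set G := {x | ∃ s ∈ S, m • s = x} with hT
      have hrel : ∀ a b : G, a - b ∈ T ↔ φ a - φ b ∈ T := fun a b => IHm a b
      have hTinj : ∀ a ∈ T, ∀ b ∈ T, p • a = p • b → a = b := by
        rintro a ⟨s, hs, rfl⟩ b ⟨t, ht, rfl⟩ he
        rw [← hksmul, ← hksmul] at he
        rw [hkinj s hs t ht he]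
      have htrans : ∀ x : G, (∃ s ∈ S, k • s = x) ↔ (∃ t ∈ T, p • t = x) := by
        intro x
        constructor
        · rintro ⟨s, hs, rfl⟩
          exact ⟨m • s, ⟨s, hs, rfl⟩, (hksmul s).symm⟩
        · rintro ⟨t, ⟨s, hs, rfl⟩, rfl⟩
          exact ⟨s, hs, hksmul s⟩
      rw [htrans, htrans]
      rw [iff_not_comm.mp (tup_card_dvd_iff hp T hTinj (g - h)),
        iff_not_comm.mp (tup_card_dvd_iff hp T hTinj (φ g - φ h)),
        tup_card_eq p T φ.toEquiv hrel g h]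
      exact Iff.rfl

/-- An automorphism of `Cay(G;S)` fixing the vertex `0` maps the set `kS`
onto itself. -/
theorem aut_fix_zero_maps_smul_set {G : Type*} [AddCommGroup G] [Fintype G]
    (S : Set G) (hSsym : ∀ s ∈ S, -s ∈ S) (hS0 : (0 : G) ∉ S)
    (k : ℕ) (hk : 0 < k)
    (hinj : ∀ s ∈ S, ∀ t ∈ S, s ≠ t → k • s ≠ k • t)
    (h0 : (0 : G) ∉ (fun s => k • s) '' S)
    (φ : cayleyGraph S ≃g cayleyGraph S) (hφ0 : φ 0 = 0) :
    (fun g => φ g) '' ((fun s => k • s) '' S) = (fun s => k • s) '' S := by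
  classical
  have hkinj' : ∀ s ∈ S, ∀ t ∈ S, k • s = k • t → s = t := by
    intro s hs t ht he
    by_contra hne
    exact hinj s hs t ht hne he
  have K := key_rel S hSsym hS0 φ k hk hkinj'
  ext y
  simp only [Set.mem_image]
  constructor
  · rintro ⟨x, ⟨s, hs, rfl⟩, rfl⟩
    have h1 : ∃ u ∈ S, k • u = (k • s : G) - 0 := ⟨s, hs, by rw [sub_zero]⟩
    obtain ⟨t, ht, hts⟩ := (K (k • s) 0).mp h1
    exact ⟨t, ht, by rw [hts, hφ0, sub_zero]⟩
  · rintro ⟨s, hs, rfl⟩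
    refine ⟨φ.symm (k • s), ?_, φ.apply_symm_apply (k • s)⟩
    have h2 : ∃ t ∈ S, k • t = φ (φ.symm (k • s)) - φ 0 := by
      rw [φ.apply_symm_apply, hφ0, sub_zero]
      exact ⟨s, hs, rfl⟩
    obtain ⟨t, ht, hts⟩ := (K (φ.symm (k • s)) 0).mpr h2
    exact ⟨t, ht, by rw [hts, sub_zero]⟩
end

section
/- Let X be a finite simple graph with nonempty vertex set. If every automorphism of the canonical bipartite double cover BX lies in the image of the canonical embedding of Aut(X) × S₂ into Aut(BX) (i.e., X is stable), then X is connected and twin-free. -/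
/-- A stable graph (one whose canonical double cover has only the obvious
automorphisms) is connected and twin-free. -/
theorem connected_and_twinFree_of_stable {V : Type*} [Fintype V] [Nonempty V]
    (X : SimpleGraph V)
    (hstable : ∀ φ : doubleCover X ≃g doubleCover X,
      ∃ (α : X ≃g X) (σ : Equiv.Perm (ZMod 2)),
        ∀ (v : V) (i : ZMod 2), φ (v, i) = (α v, σ i)) :
    X.Connected ∧
      ∀ v w : V, X.neighborSet v = X.neighborSet w → v = w := by
  classical
  constructor
  · rw [SimpleGraph.connected_iff]
    refine ⟨?_, inferInstance⟩
    by_contra hpc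
    simp only [SimpleGraph.Preconnected] at hpc
    push_neg at hpc
    obtain ⟨v, w, hvw⟩ := hpc
    set A : Set V := {u | X.Reachable v u} with hA
    have hedge : ∀ {a b : V}, X.Adj a b → (a ∈ A ↔ b ∈ A) := by
      intro a b hab
      constructor
      · intro h; exact h.trans hab.reachable
      · intro h; exact h.trans hab.symm.reachable
    have hinv : Function.Involutive (fun p : V × ZMod 2 =>
        (p.1, p.2 + (if p.1 ∈ A then 1 else 0))) := by
      intro p
      simp only
      have h11 : (1 : ZMod 2) + 1 = 0 := rfl
      split
      · rw [add_assoc, h11, add_zero]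
      · rw [add_zero, add_zero]
    have hcanc : ∀ (i j c : ZMod 2), i + c ≠ j + c ↔ i ≠ j := by decide
    let φ : doubleCover X ≃g doubleCover X := by
      refine ⟨hinv.toPerm, ?_⟩
      intro a b
      show (doubleCover X).Adj _ _ ↔ (doubleCover X).Adj _ _
      simp only [Function.Involutive.coe_toPerm, doubleCover]
      constructor
      · rintro ⟨h1, h2⟩
        refine ⟨h1, ?_⟩
        rw [if_congr (hedge h1) rfl rfl, hcanc] at h2
        exact h2
      · rintro ⟨h1, h2⟩
        refine ⟨h1, ?_⟩
        rw [if_congr (hedge h1) rfl rfl, hcanc]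
        exact h2
    obtain ⟨α, σ, hφ⟩ := hstable φ
    have hv : φ (v, 0) = (v, 1) := by
      show ((v : V), (0 : ZMod 2) + (if v ∈ A then 1 else 0)) = (v, 1)
      have : v ∈ A := SimpleGraph.Reachable.refl v
      simp [this]
    have hw : φ (w, 0) = (w, 0) := by
      show ((w : V), (0 : ZMod 2) + (if w ∈ A then 1 else 0)) = (w, 0)
      have : w ∉ A := hvw
      simp [this]
    have h1 : σ 0 = 1 := by
      have := hφ v 0
      rw [hv] at this
      exact ((Prod.mk.injEq _ _ _ _).mp this.symm).2
    have h2 : σ 0 = 0 := by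
      have := hφ w 0
      rw [hw] at this
      exact ((Prod.mk.injEq _ _ _ _).mp this.symm).2
    rw [h1] at h2
    exact absurd h2 (by decide)
  · intro v w hN
    set s : Equiv.Perm V := Equiv.swap v w with hs
    have key : ∀ a b : V, X.Adj (s a) b ↔ X.Adj a b := by
      intro a b
      have hvb : X.Adj v b ↔ X.Adj w b := by
        have := Set.ext_iff.mp hN b
        simpa [SimpleGraph.mem_neighborSet] using this
      rcases eq_or_ne a v with rfl | hav
      · rw [hs, Equiv.swap_apply_left]; exact hvb.symm
      rcases eq_or_ne a w with rfl | haw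
      · rw [hs, Equiv.swap_apply_right]; exact hvb
      · rw [hs, Equiv.swap_apply_of_ne_of_ne hav haw]
    have key' : ∀ a b : V, X.Adj a (s b) ↔ X.Adj a b := by
      intro a b
      rw [X.adj_comm, key, X.adj_comm]
    have hinv : Function.Involutive (fun p : V × ZMod 2 =>
        ((if p.2 = 0 then s p.1 else p.1), p.2)) := by
      intro p
      simp only
      split
      · simp [hs]
      · rfl
    let φ : doubleCover X ≃g doubleCover X := by
      refine ⟨hinv.toPerm, ?_⟩
      intro a b
      show (doubleCover X).Adj _ _ ↔ (doubleCover X).Adj _ _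
      simp only [Function.Involutive.coe_toPerm, doubleCover]
      obtain ⟨a1, a2⟩ := a
      obtain ⟨b1, b2⟩ := b
      have h2 : ∀ x : ZMod 2, x = 0 ∨ x = 1 := by decide
      rcases h2 a2 with rfl | rfl <;> rcases h2 b2 with rfl | rfl <;>
        simp [key, key']
    obtain ⟨α, σ, hφ⟩ := hstable φ
    have hv0 : φ (v, 0) = (w, 0) := by
      show ((if (0 : ZMod 2) = 0 then s v else v), (0 : ZMod 2)) = (w, 0)
      simp [hs]
    have hv1 : φ (v, 1) = (v, 1) := by
      show ((if (1 : ZMod 2) = 0 then s v else v), (1 : ZMod 2)) = (v, 1)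
      norm_num
    have e0 : α v = w := by
      have := hφ v 0
      rw [hv0] at this
      exact ((Prod.mk.injEq _ _ _ _).mp this.symm).1
    have e1 : α v = v := by
      have := hφ v 1
      rw [hv1] at this
      exact ((Prod.mk.injEq _ _ _ _).mp this.symm).1
    rw [e1] at e0
    exact e0
end
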